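/- For n ≥ 1, the alternating sum of degenerate Eulerian numbers satisfies ∑_{k=0}^{n} A_λ(n,k) (-1)^k = 2^{n+1} (2^{n+1} β_{n+1,λ/2} - β_{n+1,λ})/(n+1). -/

import Mathlib

open Finset PowerSeries

/-- Degenerate falling factorial `(x)_{n,λ} = x(x-λ)⋯(x-(n-1)λ)`. -/
noncomputable def dfall (l x : ℝ) (n : ℕ) : ℝ := ∏ i ∈ Finset.range n, (x - i * l)

/-- Degenerate Eulerian number `A_λ(n,k) = ∑_{i=0}^k C(n+1,i)(-1)^i (k-i+1)_{n,λ}`. -/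
noncomputable def degEulerianNum (l : ℝ) (n k : ℕ) : ℝ :=
  ∑ i ∈ Finset.range (k+1), ((n+1).choose i : ℝ) * (-1)^i * dfall l ((k : ℝ) - i + 1) n

/-- Degenerate Eulerian polynomial `A_{n,λ}(x) = ∑_{k=0}^n A_λ(n,k) x^k`. -/
noncomputable def degEulerianPoly (l : ℝ) (n : ℕ) (x : ℝ) : ℝ :=
  ∑ k ∈ Finset.range (n+1), degEulerianNum l n k * x^k

/-- Generalized binomial coefficient `binom(y,m) = y(y-1)⋯(y-m+1)/m!`. -/
noncomputable def genBinom (y : ℝ) (m : ℕ) : ℝ :=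
  (∏ i ∈ Finset.range m, (y - i)) / m.factorial

/-- Degenerate exponential `e_λ^x(t) = ∑_k (x)_{k,λ} t^k/k!` as a formal power series. -/
noncomputable def degExp (l x : ℝ) : PowerSeries ℝ :=
  PowerSeries.mk fun k => dfall l x k / k.factorial

/-- Degenerate Stirling number of the second kind (explicit formula). -/
noncomputable def degStirling2 (l : ℝ) (n k : ℕ) : ℝ :=
  (-1)^k / k.factorial * ∑ j ∈ Finset.range (k+1), (-1)^j * (k.choose j : ℝ) * dfall l j n

lemma dfall_zero (l x : ℝ) : dfall l x 0 = 1 := by simp [dfall]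
lemma dfall_succ (l x : ℝ) (n : ℕ) : dfall l x (n+1) = dfall l x n * (x - n*l) := by
  simp [dfall, Finset.prod_range_succ]
lemma dfall_zero_left (l : ℝ) (n : ℕ) (hn : n ≠ 0) : dfall l 0 n = 0 := by
  obtain ⟨m, rfl⟩ := Nat.exists_eq_succ_of_ne_zero hn
  induction m with
  | zero => simp [dfall]
  | succ k ih => rw [dfall_succ]; rw [ih (by simp)]; ring

lemma dfall_add (l x y : ℝ) (n : ℕ) :
    dfall l (x+y) n = ∑ k ∈ range (n+1), (n.choose k : ℝ) * dfall l x k * dfall l y (n-k) := by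
  induction n with
  | zero => simp [dfall]
  | succ n ih =>
    rw [dfall_succ, ih, Finset.sum_mul]
    have key : ∀ k ∈ range (n+1),
        (n.choose k : ℝ) * dfall l x k * dfall l y (n-k) * (x + y - n*l)
        = ((n.choose k : ℝ) * dfall l x (k+1) * dfall l y (n-k))
          + ((n.choose k : ℝ) * dfall l x k * dfall l y (n-k+1)) := by
      intro k hk
      rw [Finset.mem_range] at hk
      rw [dfall_succ, dfall_succ]
      have : ((n - k : ℕ) : ℝ) = (n : ℝ) - k := by
        push_cast [Nat.cast_sub (by omega : k ≤ n)]; ring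
      rw [this]; ring
    rw [Finset.sum_congr rfl key, Finset.sum_add_distrib]
    rw [Finset.sum_range_succ' (fun k => ((n+1).choose k : ℝ) * dfall l x k * dfall l y (n+1-k))]
    have pascal : ∀ j, ((n+1).choose (j+1) : ℝ) = (n.choose j : ℝ) + (n.choose (j+1) : ℝ) := by
      intro j; rw [Nat.choose_succ_succ]; push_cast; ring
    have expand : ∀ j ∈ range (n+1),
        ((n+1).choose (j+1) : ℝ) * dfall l x (j+1) * dfall l y (n+1-(j+1))
        = (n.choose j : ℝ) * dfall l x (j+1) * dfall l y (n-j)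
          + (n.choose (j+1) : ℝ) * dfall l x (j+1) * dfall l y (n-(j+1)+1) := by
      intro j hj; rw [Finset.mem_range] at hj
      rw [pascal]
      have h1 : n+1-(j+1) = n-j := by omega
      rw [h1]
      rcases Nat.lt_or_ge j n with hjn | hjn
      · have h2 : n-j = n-(j+1)+1 := by omega
        rw [h2]; ring
      · have hje : j = n := by omega
        subst hje
        rw [Nat.choose_succ_self]; push_cast; ring
    rw [Finset.sum_congr rfl expand, Finset.sum_add_distrib]
    have shift : (∑ j ∈ range (n+1), (n.choose (j+1) : ℝ) * dfall l x (j+1) * dfall l y (n-(j+1)+1))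
        + ((n+1).choose 0 : ℝ) * dfall l x 0 * dfall l y (n+1-0)
        = ∑ k ∈ range (n+1), (n.choose k : ℝ) * dfall l x k * dfall l y (n-k+1) := by
      rw [show ∑ k ∈ range (n+1), (n.choose k : ℝ) * dfall l x k * dfall l y (n-k+1)
          = ∑ k ∈ range (n+2), (n.choose k : ℝ) * dfall l x k * dfall l y (n-k+1) from ?_]
      · rw [Finset.sum_range_succ' (fun k => (n.choose k : ℝ) * dfall l x k * dfall l y (n-k+1))]
        simp
      · rw [show n+2 = (n+1)+1 from rfl, Finset.sum_range_succ (f := fun k => (n.choose k : ℝ) * dfall l x k * dfall l y (n-k+1)) (n := n+1)]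
        simp [Nat.choose_succ_self]
    rw [add_assoc, shift]


lemma dfall_two (l : ℝ) (k : ℕ) : dfall l 2 k = 2^k * dfall (l/2) 1 k := by
  induction k with
  | zero => simp [dfall_zero]
  | succ k ih => rw [dfall_succ, dfall_succ, ih]; ring

lemma degExp_zero (l : ℝ) : degExp l 0 = 1 := by
  ext k
  rw [degExp, coeff_mk]
  cases k with
  | zero => simp [dfall_zero]
  | succ k => simp [dfall_zero_left l (k+1) (Nat.succ_ne_zero k)]

lemma degExp_add (l x y : ℝ) : degExp l x * degExp l y = degExp l (x+y) := by
  ext k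
  rw [coeff_mul, degExp, degExp, degExp]
  simp only [coeff_mk]
  rw [Finset.Nat.sum_antidiagonal_eq_sum_range_succ (fun i j => dfall l x i / i.factorial * (dfall l y j / j.factorial))]
  rw [dfall_add]
  rw [Finset.sum_div]
  refine Finset.sum_congr rfl fun i hi => ?_
  rw [Finset.mem_range] at hi
  have hik : i ≤ k := by omega
  have hfac : (k.choose i : ℝ) = (k.factorial : ℝ) / (i.factorial * (k-i).factorial) := by
    rw [eq_div_iff (by positivity)]
    norm_cast
    rw [← Nat.choose_mul_factorial_mul_factorial hik, mul_assoc]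
  rw [hfac]
  have h1 : (i.factorial : ℝ) ≠ 0 := by positivity
  have h2 : ((k-i).factorial : ℝ) ≠ 0 := by positivity
  have h3 : (k.factorial : ℝ) ≠ 0 := by positivity
  field_simp

lemma degExp_pow (l : ℝ) (j : ℕ) : (degExp l 1)^j = degExp l j := by
  induction j with
  | zero => simpa using (degExp_zero l).symm
  | succ j ih => rw [pow_succ, ih, mul_comm, degExp_add]; rw [add_comm]; push_cast; ring_nf



noncomputable def E2 (l : ℝ) : PowerSeries ℝ := rescale 2 (degExp l 1)

lemma constCoeff_E2 (l : ℝ) : (constantCoeff) (E2 l) = 1 := by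
  rw [← coeff_zero_eq_constantCoeff_apply, E2, coeff_rescale, degExp, coeff_mk]
  simp [dfall_zero]

noncomputable def dd (l : ℝ) (r m : ℕ) : ℝ :=
  ∑ i ∈ range (r+1), (-1:ℝ)^(r-i) * (r.choose i) * dfall l ((i:ℝ)+1) m

noncomputable def SS (l : ℝ) (M : ℕ) : PowerSeries ℝ :=
  ∑ r ∈ range (M+1), (C (-1/2:ℝ))^r * (E2 l * (E2 l - 1)^r)

noncomputable def uu (l : ℝ) (m : ℕ) : ℝ := ∑ r ∈ range (m+1), (-1:ℝ)^r * 2^(m-r) * dd l r m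

noncomputable def UU (l : ℝ) : PowerSeries ℝ := PowerSeries.mk fun m => uu l m / m.factorial


lemma coeff_E2_pow (l : ℝ) (j m : ℕ) :
    (coeff m) ((E2 l)^j) = 2^m * dfall l j m / m.factorial := by
  rw [E2, ← map_pow, degExp_pow, coeff_rescale, degExp, coeff_mk, mul_div_assoc]

lemma coeff_E2 (l : ℝ) (m : ℕ) :
    (coeff m) (E2 l) = 2^m * dfall l 1 m / m.factorial := by
  have := coeff_E2_pow l 1 m
  rw [pow_one] at this; rw [this]; norm_num

lemma coeff_EP (l : ℝ) (r m : ℕ) :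
    (coeff m) (E2 l * (E2 l - 1)^r) = 2^m * dd l r m / m.factorial := by
  have hexp : (E2 l - 1 : PowerSeries ℝ)^r
      = ∑ i ∈ range (r+1), C ((-1:ℝ)^(r-i) * (r.choose i)) * (E2 l)^i := by
    rw [sub_eq_add_neg, add_pow]
    refine Finset.sum_congr rfl fun i hi => ?_
    have h1 : ((-1 : PowerSeries ℝ))^(r-i) = C ((-1:ℝ)^(r-i)) := by
      rw [map_pow, map_neg, map_one]
    have h2 : ((r.choose i : ℕ) : PowerSeries ℝ) = C ((r.choose i : ℝ)) := by
      simp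
    rw [h1, h2, map_mul]
    ring
  rw [hexp, Finset.mul_sum, map_sum, dd, mul_div_assoc, Finset.sum_div, Finset.mul_sum]
  refine Finset.sum_congr rfl fun i hi => ?_
  have : E2 l * (C ((-1:ℝ)^(r-i) * (r.choose i)) * (E2 l)^i)
      = C ((-1:ℝ)^(r-i) * (r.choose i)) * (E2 l)^(i+1) := by ring
  rw [this, coeff_C_mul, coeff_E2_pow]
  push_cast
  field_simp

lemma dd_vanish (l : ℝ) {r m : ℕ} (h : m < r) : dd l r m = 0 := by
  have hdvd : (X : PowerSeries ℝ)^r ∣ E2 l * (E2 l - 1)^r := by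
    refine Dvd.dvd.mul_left (pow_dvd_pow_of_dvd ?_ r) _
    rw [X_dvd_iff, map_sub, map_one]
    have h1 : (constantCoeff) (E2 l) = 1 := by
      rw [← coeff_zero_eq_constantCoeff_apply, coeff_E2]
      simp [dfall_zero]
    rw [h1]; ring
  have h0 := (X_pow_dvd_iff.mp hdvd) m h
  rw [coeff_EP] at h0
  have h2 : (2:ℝ)^m ≠ 0 := by positivity
  have h3 : (m.factorial : ℝ) ≠ 0 := by positivity
  rw [div_eq_zero_iff] at h0
  rcases h0 with h0 | h0
  · rcases mul_eq_zero.mp h0 with h | h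
    · exact absurd h h2
    · exact h
  · exact absurd h0 h3


lemma tele (l : ℝ) (M : ℕ) : (1 + E2 l) * SS l M
    = 2 * E2 l - 2 * (C (-1/2:ℝ))^(M+1) * (E2 l * (E2 l - 1)^(M+1)) := by
  have hc : (2 : PowerSeries ℝ) * C (-1/2:ℝ) + 1 = 0 := by
    have h2 : (2 : PowerSeries ℝ) = C (2:ℝ) := (map_ofNat C 2).symm
    have h1 : (1 : PowerSeries ℝ) = C (1:ℝ) := (map_one C).symm
    rw [h2, h1, ← map_mul, ← map_add]
    norm_num
  induction M with
  | zero =>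
    rw [SS]
    simp only [zero_add, Finset.sum_range_one, pow_zero, one_mul, pow_one]
    linear_combination (E2 l * (E2 l - 1)) * hc
  | succ M ih =>
    rw [SS, Finset.sum_range_succ, ← SS, mul_add, ih]
    linear_combination ((C (-1/2:ℝ))^(M+1) * (E2 l * (E2 l - 1)^(M+1)) * (E2 l - 1)) * hc

lemma coeff_UU_SS (l : ℝ) {m M : ℕ} (hmM : m ≤ M) :
    (coeff m) (UU l) = (coeff m) (SS l M) := by
  rw [UU, coeff_mk, SS, map_sum]
  have key : ∀ r ∈ range (M+1), (coeff m) ((C (-1/2:ℝ))^r * (E2 l * (E2 l - 1)^r))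
      = (-1:ℝ)^r * 2^(m-r) * dd l r m / m.factorial := by
    intro r hr
    rw [← map_pow, coeff_C_mul, coeff_EP]
    rcases Nat.lt_or_ge m r with h | h
    · rw [dd_vanish l h]; ring
    · have h2r : (2:ℝ)^(m-r) = 2^m / 2^r := by
        rw [eq_div_iff (by positivity), ← pow_add]; congr 1; omega
      rw [div_pow, h2r]
      have hr2 : (2:ℝ)^r ≠ 0 := by positivity
      have hmf : (m.factorial : ℝ) ≠ 0 := by positivity
      field_simp
  rw [Finset.sum_congr rfl key, uu, Finset.sum_div]
  apply Finset.sum_subset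
  · intro r hr
    rw [Finset.mem_range] at hr ⊢
    omega
  · intro r hr hr2
    rw [Finset.mem_range] at hr hr2
    rw [dd_vanish l (show m < r by omega)]
    ring

lemma coeff_P_vanish (l : ℝ) (m : ℕ) : (coeff m) (E2 l * (E2 l - 1)^(m+1)) = 0 := by
  rw [coeff_EP, dd_vanish l (Nat.lt_succ_self m)]
  ring

lemma UU_id (l : ℝ) : (1 + E2 l) * UU l = 2 * E2 l := by
  ext m
  have h1 : (coeff m) ((1 + E2 l) * UU l) = (coeff m) ((1 + E2 l) * SS l m) := by
    rw [coeff_mul, coeff_mul]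
    refine Finset.sum_congr rfl fun p hp => ?_
    rw [Finset.HasAntidiagonal.mem_antidiagonal] at hp
    rw [coeff_UU_SS l (show p.2 ≤ m by omega)]
  rw [h1, tele, map_sub]
  have h2 : (2 : PowerSeries ℝ) * (C (-1/2:ℝ))^(m+1) = C (2 * (-1/2:ℝ)^(m+1)) := by
    rw [← map_pow, map_mul, map_ofNat]
  rw [h2, coeff_C_mul, coeff_P_vanish, mul_zero, sub_zero]



lemma dfall_one_one (μ : ℝ) : dfall μ 1 1 = 1 := by simp [dfall]
lemma dfall_x_zero (μ x : ℝ) : dfall μ x 0 = 1 := by simp [dfall]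

lemma b_zero (μ : ℝ) (b : ℝ → ℕ → ℝ)
    (hb : (PowerSeries.X : PowerSeries ℝ) =
      (degExp μ 1 - 1) * PowerSeries.mk (fun m => b μ m / m.factorial)) : b μ 0 = 1 := by
  have h := congrArg (coeff 1) hb
  rw [coeff_one_X, coeff_mul, Finset.Nat.sum_antidiagonal_eq_sum_range_succ_mk] at h
  simp only [Finset.sum_range_succ, Finset.sum_range_zero] at h
  rw [map_sub, map_sub] at h
  simp only [degExp, coeff_mk, coeff_one, coeff_zero_eq_constantCoeff] at h
  rw [dfall_one_one, dfall_x_zero] at h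
  norm_num at h
  linarith [h]

lemma E2_sq (l : ℝ) : (E2 l)^2 = rescale 4 (degExp (l/2) 1) := by
  ext m
  rw [coeff_E2_pow, coeff_rescale, degExp, coeff_mk]
  rw [show ((2:ℕ):ℝ) = (2:ℝ) by norm_cast, dfall_two]
  rw [show (4:ℝ) = 2*2 by norm_num, mul_pow]
  ring

lemma E2_sub_one_ne (l : ℝ) : E2 l - 1 ≠ (0 : PowerSeries ℝ) := by
  intro h
  have := congrArg (coeff 1) h
  rw [map_sub, coeff_E2, dfall_one_one] at this
  simp at this

lemma one_add_E2_ne (l : ℝ) : 1 + E2 l ≠ (0 : PowerSeries ℝ) := by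
  intro h
  have := congrArg (constantCoeff) h
  rw [map_add, map_one, constCoeff_E2] at this
  norm_num at this

lemma Cs_id (l : ℝ) (b : ℝ → ℕ → ℝ)
    (hb : ∀ μ : ℝ, (PowerSeries.X : PowerSeries ℝ) =
      (degExp μ 1 - 1) * PowerSeries.mk (fun m => b μ m / m.factorial)) :
    (1 + E2 l) * PowerSeries.mk
      (fun m => ((4:ℝ)^(m+1) * b (l/2) (m+1) - 2^(m+1) * b l (m+1)) / (m+1).factorial)
      = -2 := by
  set P : PowerSeries ℝ := rescale 2 (PowerSeries.mk (fun m => b l m / m.factorial)) with hP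
  set Q : PowerSeries ℝ := rescale 4 (PowerSeries.mk (fun m => b (l/2) m / m.factorial)) with hQ
  set Cs : PowerSeries ℝ := PowerSeries.mk
      (fun m => ((4:ℝ)^(m+1) * b (l/2) (m+1) - 2^(m+1) * b l (m+1)) / (m+1).factorial) with hCs
  have hbl := hb l
  have hbl2 := hb (l/2)
  have h2X : (E2 l - 1) * P = C 2 * X := by
    have h := congrArg (rescale (2:ℝ)) hbl
    rw [map_mul, map_sub, map_one, PowerSeries.rescale_X] at h
    rw [E2, hP]
    exact h.symm
  have h4X : ((E2 l)^2 - 1) * Q = C 4 * X := by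
    have h := congrArg (rescale (4:ℝ)) hbl2
    rw [map_mul, map_sub, map_one, PowerSeries.rescale_X] at h
    rw [E2_sq, hQ]
    exact h.symm
  have key1 : (1 + E2 l) * Q = 2 * P := by
    have hfac : (E2 l - 1) * ((1 + E2 l) * Q - 2 * P) = 0 := by
      have e1 : (E2 l - 1) * ((1 + E2 l) * Q) = ((E2 l)^2 - 1) * Q := by ring
      calc (E2 l - 1) * ((1 + E2 l) * Q - 2 * P)
          = ((E2 l)^2 - 1) * Q - 2 * ((E2 l - 1) * P) := by ring
        _ = C 4 * X - 2 * (C 2 * X) := by rw [h2X, h4X]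
        _ = 0 := by
            rw [show (2 : PowerSeries ℝ) = C 2 from (map_ofNat C 2).symm,
              show (4:ℝ) = 2*2 by norm_num, map_mul]
            ring
    rcases mul_eq_zero.mp hfac with h | h
    · exact absurd h (E2_sub_one_ne l)
    · exact sub_eq_zero.mp h
  have hXC : X * Cs = Q - P := by
    ext k
    cases k with
    | zero =>
      rw [map_sub]
      simp only [hQ, hP, hCs, coeff_zero_eq_constantCoeff, map_mul, constantCoeff_X, zero_mul]
      rw [show (constantCoeff) ((rescale 4) (PowerSeries.mk fun m => b (l/2) m / ↑m.factorial))
          = b (l/2) 0 / (0).factorial from ?_,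
        show (constantCoeff) ((rescale 2) (PowerSeries.mk fun m => b l m / ↑m.factorial))
          = b l 0 / (0).factorial from ?_]
      · rw [b_zero l b hbl, b_zero (l/2) b hbl2]
        norm_num
      · rw [← coeff_zero_eq_constantCoeff_apply, coeff_rescale, coeff_mk]; norm_num
      · rw [← coeff_zero_eq_constantCoeff_apply, coeff_rescale, coeff_mk]; norm_num
    | succ m =>
      rw [PowerSeries.coeff_succ_X_mul, map_sub, hQ, hP, hCs, coeff_rescale, coeff_rescale,
        coeff_mk, coeff_mk, coeff_mk]
      rw [sub_div]
      ring
  have hfinal : X * ((1 + E2 l) * Cs) = X * (-2) := by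
    calc X * ((1 + E2 l) * Cs) = (1 + E2 l) * (X * Cs) := by ring
      _ = (1 + E2 l) * Q - (1 + E2 l) * P := by rw [hXC]; ring
      _ = 2 * P - (1 + E2 l) * P := by rw [key1]
      _ = -((E2 l - 1) * P) := by ring
      _ = -(C 2 * X) := by rw [h2X]
      _ = X * (-2) := by
          rw [show (C (2:ℝ) : PowerSeries ℝ) = 2 from map_ofNat _ 2]; ring
  exact mul_left_cancel₀ PowerSeries.X_ne_zero hfinal



lemma alt_choose_real (N : ℕ) :
    ∑ s ∈ range (N+1), (-1:ℝ)^s * ((N.choose s : ℕ) : ℝ) = if N = 0 then 1 else 0 := by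
  rcases Nat.eq_zero_or_pos N with h0 | h0
  · subst h0; norm_num
  · rw [if_neg (by omega)]
    have h := Int.alternating_sum_range_choose_of_ne (show N ≠ 0 by omega)
    have h2 : ((∑ i ∈ range (N+1), (-1:ℤ)^i * N.choose i : ℤ) : ℝ) = 0 := by rw [h]; norm_num
    push_cast at h2
    exact h2

lemma newton (f : ℕ → ℝ) (j : ℕ) :
    f j = ∑ r ∈ range (j+1), ((j.choose r : ℕ) : ℝ) *
      (∑ i ∈ range (r+1), (-1:ℝ)^(r-i) * ((r.choose i : ℕ) : ℝ) * f i) := by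
  have step1 : ∀ r ∈ range (j+1),
      ((j.choose r : ℕ) : ℝ) * (∑ i ∈ range (r+1), (-1:ℝ)^(r-i) * ((r.choose i : ℕ) : ℝ) * f i)
      = ∑ i ∈ range (j+1), ((j.choose r : ℕ) : ℝ) * ((-1:ℝ)^(r-i) * ((r.choose i : ℕ) : ℝ) * f i) := by
    intro r hr
    rw [Finset.mem_range] at hr
    rw [Finset.mul_sum]
    apply Finset.sum_subset
    · intro i hi; rw [Finset.mem_range] at hi ⊢; omega
    · intro i hi hi2
      rw [Finset.mem_range] at hi hi2
      rw [Nat.choose_eq_zero_of_lt (show r < i by omega)]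
      push_cast; ring
  rw [Finset.sum_congr rfl step1, Finset.sum_comm]
  have inner : ∀ i ∈ range (j+1),
      ∑ r ∈ range (j+1), ((j.choose r : ℕ) : ℝ) * ((-1:ℝ)^(r-i) * ((r.choose i : ℕ) : ℝ) * f i)
      = (if i = j then 1 else 0) * f i := by
    intro i hi
    rw [Finset.mem_range] at hi
    have hij : i ≤ j := by omega
    have htrunc : ∑ r ∈ range (j+1), ((j.choose r : ℕ) : ℝ) * ((-1:ℝ)^(r-i) * ((r.choose i : ℕ) : ℝ) * f i)
        = ∑ r ∈ Finset.Ico i (j+1), ((j.choose r : ℕ) : ℝ) * ((-1:ℝ)^(r-i) * ((r.choose i : ℕ) : ℝ) * f i) := by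
      rw [eq_comm]
      apply Finset.sum_subset
      · intro r hr; rw [Finset.mem_Ico] at hr; rw [Finset.mem_range]; omega
      · intro r hr hr2
        rw [Finset.mem_range] at hr
        rw [Finset.mem_Ico] at hr2
        push_neg at hr2
        have : r < i := by
          by_contra hc
          push_neg at hc
          exact absurd (hr2 hc) (by omega)
        rw [Nat.choose_eq_zero_of_lt (show r < i from this)]
        push_cast; ring
    rw [htrunc, Finset.sum_Ico_eq_sum_range]
    have key : ∀ s ∈ range (j+1-i),
        ((j.choose (i+s) : ℕ) : ℝ) * ((-1:ℝ)^((i+s)-i) * (((i+s).choose i : ℕ) : ℝ) * f i)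
        = ((j.choose i : ℕ) : ℝ) * f i * ((-1:ℝ)^s * (((j-i).choose s : ℕ) : ℝ)) := by
      intro s hs
      rw [Finset.mem_range] at hs
      have h1 : (i+s)-i = s := by omega
      have h2 : (j.choose (i+s)) * ((i+s).choose i) = (j.choose i) * ((j-i).choose s) := by
        have := Nat.choose_mul (n := j) (show i ≤ i+s by omega)
        simpa [Nat.add_sub_cancel_left] using this
      rw [h1]
      have h2r : ((j.choose (i+s) : ℕ) : ℝ) * (((i+s).choose i : ℕ) : ℝ)
          = ((j.choose i : ℕ) : ℝ) * (((j-i).choose s : ℕ) : ℝ) := by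
        exact_mod_cast h2
      calc ((j.choose (i+s) : ℕ) : ℝ) * ((-1:ℝ)^s * (((i+s).choose i : ℕ) : ℝ) * f i)
          = (((j.choose (i+s) : ℕ) : ℝ) * (((i+s).choose i : ℕ) : ℝ)) * ((-1:ℝ)^s * f i) := by ring
        _ = (((j.choose i : ℕ) : ℝ) * (((j-i).choose s : ℕ) : ℝ)) * ((-1:ℝ)^s * f i) := by rw [h2r]
        _ = ((j.choose i : ℕ) : ℝ) * f i * ((-1:ℝ)^s * (((j-i).choose s : ℕ) : ℝ)) := by ring
    rw [Finset.sum_congr rfl key, ← Finset.mul_sum]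
    rw [show j+1-i = (j-i)+1 by omega]
    rw [alt_choose_real (j-i)]
    rcases Nat.lt_or_ge i j with h | h
    · rw [if_neg (by omega), if_neg (by omega)]
      ring
    · have : i = j := by omega
      rw [if_pos (by omega : j - i = 0), if_pos this]
      subst this
      simp
  rw [Finset.sum_congr rfl inner]
  simp only [ite_mul, one_mul, zero_mul]
  rw [Finset.sum_ite_eq' (range (j+1)) j f]
  rw [if_pos (Finset.self_mem_range_succ j)]


lemma p_expand (l : ℝ) (n j : ℕ) :
    dfall l ((j:ℝ)+1) n = ∑ r ∈ range (n+1), ((j.choose r : ℕ) : ℝ) * dd l r n := by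
  have hnewt := newton (fun i => dfall l ((i:ℝ)+1) n) j
  have hdd : ∀ r, (∑ i ∈ range (r+1), (-1:ℝ)^(r-i) * ((r.choose i : ℕ) : ℝ)
      * dfall l ((i:ℝ)+1) n) = dd l r n := fun r => rfl
  simp only [hdd] at hnewt
  rw [hnewt]
  set g : ℕ → ℝ := fun r => ((j.choose r : ℕ) : ℝ) * dd l r n with hg
  have e1 : ∑ r ∈ range (j+1), g r = ∑ r ∈ range (j+n+2), g r := by
    apply Finset.sum_subset
    · intro r hr; rw [Finset.mem_range] at hr ⊢; omega
    · intro r hr hr2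
      rw [Finset.mem_range] at hr hr2
      rw [hg]
      simp only []
      rw [Nat.choose_eq_zero_of_lt (show j < r by omega)]
      push_cast; ring
  have e2 : ∑ r ∈ range (n+1), g r = ∑ r ∈ range (j+n+2), g r := by
    apply Finset.sum_subset
    · intro r hr; rw [Finset.mem_range] at hr ⊢; omega
    · intro r hr hr2
      rw [Finset.mem_range] at hr hr2
      rw [hg]
      simp only []
      rw [dd_vanish l (show n < r by omega)]
      ring
  rw [e1, ← e2]

lemma hasSum_p (l : ℝ) (n : ℕ) {x : ℝ} (hx : |x| < 1) :
    HasSum (fun j : ℕ => dfall l ((j:ℝ)+1) n * x^j)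
      (∑ r ∈ range (n+1), dd l r n * (x^r / (1-x)^(r+1))) := by
  have hg : ∀ r : ℕ, HasSum (fun j : ℕ => ((j.choose r : ℕ):ℝ) * x^j) (x^r/(1-x)^(r+1)) := by
    intro r
    have hnorm : ‖x‖ < 1 := by rwa [Real.norm_eq_abs]
    have h1 := (hasSum_choose_mul_geometric_of_norm_lt_one r hnorm).mul_left (x^r)
    have h2 : (fun m : ℕ => x^r * ((((m+r).choose r : ℕ):ℝ) * x^m))
        = fun m : ℕ => (((m+r).choose r : ℕ):ℝ) * x^(m+r) := by
      funext m; rw [pow_add]; ring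
    rw [h2, mul_one_div] at h1
    have hzero : ∑ i ∈ range r, ((i.choose r : ℕ):ℝ) * x^i = 0 := by
      apply Finset.sum_eq_zero; intro i hi; rw [Finset.mem_range] at hi
      rw [Nat.choose_eq_zero_of_lt hi]; push_cast; ring
    apply (hasSum_nat_add_iff' r).mp
    rw [hzero, sub_zero]
    exact h1
  have hsum := hasSum_sum (s := range (n+1))
    (f := fun r (j : ℕ) => dd l r n * (((j.choose r : ℕ):ℝ) * x^j))
    (a := fun r => dd l r n * (x^r/(1-x)^(r+1)))
    (fun r _ => (hg r).mul_left (dd l r n))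
  convert hsum using 1
  funext j
  rw [p_expand l n j, Finset.sum_mul]
  refine Finset.sum_congr rfl fun r hr => ?_
  ring


theorem sum_A_eq_uu (l : ℝ) (n : ℕ) (A : ℕ → ℝ)
    (hA : ∀ x : ℝ, |x| < 1 → (1-x)^(n+1) * (∑' j : ℕ, dfall l ((j:ℝ)+1) n * x^j)
      = ∑ k ∈ range (n+1), A k * x^k) :
    ∑ k ∈ range (n+1), A k * (-1:ℝ)^k = uu l n := by
  set PA : Polynomial ℝ := ∑ k ∈ range (n+1), Polynomial.C (A k) * Polynomial.X^k with hPA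
  set PB : Polynomial ℝ :=
    ∑ r ∈ range (n+1), Polynomial.C (dd l r n) * Polynomial.X^r * (1 - Polynomial.X)^(n-r) with hPB
  have hevalA : ∀ x : ℝ, PA.eval x = ∑ k ∈ range (n+1), A k * x^k := by
    intro x; rw [hPA, Polynomial.eval_finset_sum]; simp
  have hevalB : ∀ x : ℝ, PB.eval x = ∑ r ∈ range (n+1), dd l r n * x^r * (1-x)^(n-r) := by
    intro x; rw [hPB, Polynomial.eval_finset_sum]; simp
  have key : ∀ x : ℝ, |x| < 1 → PA.eval x = PB.eval x := by
    intro x hx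
    rw [hevalA, hevalB, ← hA x hx, (hasSum_p l n hx).tsum_eq, Finset.mul_sum]
    refine Finset.sum_congr rfl fun r hr => ?_
    rw [Finset.mem_range] at hr
    have hxlt : x < 1 := lt_of_le_of_lt (le_abs_self x) hx
    have hx1 : (1-x) ≠ 0 := sub_ne_zero.mpr (by linarith)
    have hpow : (1-x)^(n+1) = (1-x)^(r+1) * (1-x)^(n-r) := by
      rw [← pow_add]; congr 1; omega
    rw [hpow]
    field_simp
  have hsub : PA - PB = 0 := by
    apply Polynomial.eq_zero_of_infinite_isRoot
    have hinf : (Set.Ioo (-1:ℝ) 1).Infinite := Set.Ioo_infinite (by norm_num)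
    refine hinf.mono ?_
    · intro x hx
      rw [Set.mem_Ioo] at hx
      have : |x| < 1 := abs_lt.mpr ⟨hx.1, hx.2⟩
      simp only [Set.mem_setOf_eq, Polynomial.IsRoot, Polynomial.eval_sub]
      rw [key x this, sub_self]
  have hPAB : PA = PB := sub_eq_zero.mp hsub
  have h1 := congrArg (Polynomial.eval (-1:ℝ)) hPAB
  rw [hevalA, hevalB] at h1
  rw [h1, uu]
  refine Finset.sum_congr rfl fun r hr => ?_
  norm_num
  ring


lemma uu_val (l : ℝ) (b : ℝ → ℕ → ℝ)
    (hb : ∀ μ : ℝ, (PowerSeries.X : PowerSeries ℝ) =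
      (degExp μ 1 - 1) * PowerSeries.mk (fun m => b μ m / m.factorial))
    (n : ℕ) (hn : 1 ≤ n) :
    uu l n = n.factorial * (((4:ℝ)^(n+1) * b (l/2) (n+1) - 2^(n+1) * b l (n+1)) / (n+1).factorial) := by
  set Cs : PowerSeries ℝ := PowerSeries.mk
      (fun m => ((4:ℝ)^(m+1) * b (l/2) (m+1) - 2^(m+1) * b l (m+1)) / (m+1).factorial) with hCs
  have h := Cs_id l b hb
  rw [← hCs] at h
  have h2 := UU_id l
  have h0 : (1 + E2 l) * (UU l - Cs - 2) = 0 := by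
    rw [mul_sub, mul_sub, h2, h]
    ring
  have h3 : UU l - Cs - 2 = 0 := by
    rcases mul_eq_zero.mp h0 with h' | h'
    · exact absurd h' (one_add_E2_ne l)
    · exact h'
  have h4 : UU l = Cs + 2 := by linear_combination h3
  have h5 := congrArg (coeff n) h4
  rw [UU, coeff_mk, map_add, hCs, coeff_mk] at h5
  have h6 : (coeff n) (2 : PowerSeries ℝ) = 0 := by
    rw [show (2 : PowerSeries ℝ) = C 2 from (map_ofNat C 2).symm, coeff_C]
    rw [if_neg (by omega)]
  rw [h6, add_zero] at h5
  have hfac : (n.factorial : ℝ) ≠ 0 := by positivity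
  field_simp at h5 ⊢
  linarith [h5]


/-- with `A k` the degenerate Eulerian numbers (coefficients of the
degenerate Eulerian polynomial) and `b μ m` the degenerate Bernoulli numbers,
for `n ≥ 1`: `∑_{k=0}^n A_λ(n,k)(-1)^k = 2^{n+1}(2^{n+1}β_{n+1,λ/2} - β_{n+1,λ})/(n+1)`. -/
theorem stmt6 (l : ℝ) (n : ℕ) (hn : 1 ≤ n) (A : ℕ → ℝ)
    (hA : ∀ x : ℝ, |x| < 1 →
      (1 - x) ^ (n + 1) * (∑' j : ℕ, dfall l ((j : ℝ) + 1) n * x ^ j) =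
        ∑ k ∈ Finset.range (n + 1), A k * x ^ k)
    (b : ℝ → ℕ → ℝ)
    (hb : ∀ μ : ℝ, (PowerSeries.X : PowerSeries ℝ) =
      (degExp μ 1 - 1) * PowerSeries.mk (fun m => b μ m / m.factorial)) :
    ∑ k ∈ Finset.range (n + 1), A k * (-1)^k =
      2 ^ (n + 1) * (2 ^ (n + 1) * b (l / 2) (n + 1) - b l (n + 1)) / (n + 1) := by
  have h1 : ∑ k ∈ Finset.range (n+1), A k * (-1:ℝ)^k = uu l n := sum_A_eq_uu l n A hA
  have h2 := uu_val l b hb n hn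
  rw [h1, h2]
  have hne : ((n:ℝ)+1) ≠ 0 := by positivity
  have hfac : (n.factorial : ℝ) ≠ 0 := by positivity
  have hfs : (((n+1).factorial : ℕ) : ℝ) = ((n:ℝ)+1) * n.factorial := by
    rw [Nat.factorial_succ]; push_cast; ring
  rw [hfs, show (4:ℝ)^(n+1) = 2^(n+1)*2^(n+1) by rw [← mul_pow]; norm_num]
  field_simp
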